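/- Let f : ℝⁿ → ℝ be differentiable with ∇f Lipschitz continuous on ℝⁿ with constant L ∈ (0,∞) and f bounded below. Let {x_k} ⊂ ℝⁿ be a sequence with f(x_{k+1}) ≤ f(x_k) for every k ≥ 0, let g_k = ∇f(x_k), and let {S_k} be a sequence of linear subspaces of ℝⁿ. Suppose there is an infinite subset 𝒦 ⊆ ℕ such that dist(g_k, S_k) → 0 and f(x_{k+1}) − inf{f(x) : x ∈ x_k + S_k} → 0 as k → ∞ with k restricted to 𝒦. Then liminf_{k→∞} ‖g_k‖ = 0. -/

import Mathlib

open Filter Topology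

/-- Descent lemma for functions with Lipschitz gradient. -/
theorem descent_lemma {E : Type*} [NormedAddCommGroup E] [InnerProductSpace ℝ E]
    [CompleteSpace E]
    (f : E → ℝ) (hdiff : Differentiable ℝ f) (L : ℝ)
    (hlip : ∀ y z, ‖gradient f y - gradient f z‖ ≤ L * ‖y - z‖)
    (x v : E) :
    f (x + v) ≤ f x + inner ℝ (gradient f x) v + L / 2 * ‖v‖ ^ 2 := by
  set g := gradient f with hg
  set φ : ℝ → ℝ := fun t => f (x + t • v) - t * inner ℝ (g x) v - L * t ^ 2 / 2 * ‖v‖ ^ 2 with hφ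
  have hderiv : ∀ t : ℝ, HasDerivAt φ
      ((inner ℝ (g (x + t • v)) v : ℝ) - inner ℝ (g x) v - L * t * ‖v‖ ^ 2) t := by
    intro t
    have hc : HasDerivAt (fun t : ℝ => x + t • v) v t := by
      simpa using ((hasDerivAt_id t).smul_const v).const_add x
    have hf : HasFDerivAt f (InnerProductSpace.toDual ℝ E (g (x + t • v))) (x + t • v) :=
      (hdiff (x + t • v)).hasGradientAt
    have h1 : HasDerivAt (fun t : ℝ => f (x + t • v))
        ((inner ℝ (g (x + t • v)) v : ℝ)) t := by
      have := hf.comp_hasDerivAt t hc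
      simp [InnerProductSpace.toDual_apply_apply] at this
      exact this
    have h2 : HasDerivAt (fun t : ℝ => t * inner ℝ (g x) v) ((inner ℝ (g x) v : ℝ)) t := by
      simpa using (hasDerivAt_id t).mul_const (inner ℝ (g x) v : ℝ)
    have h3 : HasDerivAt (fun t : ℝ => L * t ^ 2 / 2 * ‖v‖ ^ 2) (L * t * ‖v‖ ^ 2) t := by
      have := ((hasDerivAt_pow 2 t).const_mul L).div_const 2
      have := this.mul_const (‖v‖ ^ 2)
      exact this.congr_deriv (by ring)
    have := (h1.sub h2).sub h3
    exact this
  have hanti : AntitoneOn φ (Set.Icc 0 1) := by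
    apply antitoneOn_of_deriv_nonpos (convex_Icc 0 1)
    · have hd : Differentiable ℝ φ := fun t => (hderiv t).differentiableAt
      exact hd.continuous.continuousOn
    · intro t _
      exact (hderiv t).differentiableAt.differentiableWithinAt
    · intro t ht
      rw [interior_Icc] at ht
      rw [(hderiv t).deriv]
      have h1 : (inner ℝ (g (x + t • v)) v : ℝ) - inner ℝ (g x) v
          = inner ℝ (g (x + t • v) - g x) v := by rw [inner_sub_left]
      rw [h1]
      have h2 : (inner ℝ (g (x + t • v) - g x) v : ℝ) ≤ ‖g (x + t • v) - g x‖ * ‖v‖ :=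
        real_inner_le_norm _ _
      have h3 : ‖g (x + t • v) - g x‖ ≤ L * ‖t • v‖ := by
        simpa using hlip (x + t • v) x
      have h4 : ‖t • v‖ = t * ‖v‖ := by
        rw [norm_smul, Real.norm_eq_abs, abs_of_nonneg ht.1.le]
      rw [h4] at h3
      have h5 : ‖g (x + t • v) - g x‖ * ‖v‖ ≤ L * t * ‖v‖ ^ 2 := by
        calc ‖g (x + t • v) - g x‖ * ‖v‖ ≤ L * (t * ‖v‖) * ‖v‖ :=
              mul_le_mul_of_nonneg_right h3 (norm_nonneg v)
          _ = L * t * ‖v‖ ^ 2 := by ring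
      linarith
  have := hanti (Set.left_mem_Icc.2 zero_le_one) (Set.right_mem_Icc.2 zero_le_one) zero_le_one
  simp only [hφ, zero_smul, add_zero, one_smul, one_pow, zero_pow, mul_zero, zero_mul,
    mul_one, sub_zero, zero_div] at this
  linarith

/-- Remark after Proposition 2.1: if condition (2.2) holds only along an infinite subset `K` of
the iterations, then `liminf ‖∇f (x k)‖ = 0`. -/
theorem optimist_gradient_liminf_zero {n : ℕ}
    (f : EuclideanSpace ℝ (Fin n) → ℝ)
    (hdiff : Differentiable ℝ f)
    (L : ℝ) (hL : 0 < L)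
    (hlip : ∀ y z, ‖gradient f y - gradient f z‖ ≤ L * ‖y - z‖)
    (hbdd : BddBelow (Set.range f))
    (x : ℕ → EuclideanSpace ℝ (Fin n))
    (hmono : ∀ k, f (x (k + 1)) ≤ f (x k))
    (S : ℕ → Submodule ℝ (EuclideanSpace ℝ (Fin n)))
    (K : Set ℕ) (hK : K.Infinite)
    (hdist : Tendsto (fun k => Metric.infDist (gradient f (x k))
        (S k : Set (EuclideanSpace ℝ (Fin n)))) (atTop ⊓ 𝓟 K) (𝓝 0))
    (hsub : Tendsto (fun k => f (x (k + 1)) - sInf (f '' {y | ∃ s ∈ S k, y = x k + s}))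
        (atTop ⊓ 𝓟 K) (𝓝 0)) :
    Filter.liminf (fun k => ‖gradient f (x k)‖) atTop = 0 := by
  classical
  set g : ℕ → EuclideanSpace ℝ (Fin n) := fun k => gradient f (x k) with hgdef
  set p : ℕ → EuclideanSpace ℝ (Fin n) := fun k => (Submodule.orthogonalProjection (S k) (g k) : EuclideanSpace ℝ (Fin n)) with hpdef
  have hpmem : ∀ k, p k ∈ S k := fun k => SetLike.coe_mem _
  -- inner product of g with its projection
  have hip : ∀ k, (inner ℝ (g k) (p k) : ℝ) = ‖p k‖ ^ 2 := by
    intro k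
    have h0 : (inner ℝ (g k - p k) (p k) : ℝ) = 0 :=
      Submodule.starProjection_inner_eq_zero (K := S k) (g k) (p k) (hpmem k)
    have := real_inner_self_eq_norm_sq (p k)
    rw [inner_sub_left] at h0
    linarith
  -- the projection residual is at most the infDist
  have hpyth : ∀ k, ‖g k - p k‖ ≤ Metric.infDist (g k) (S k : Set (EuclideanSpace ℝ (Fin n))) := by
    intro k
    by_contra h
    push_neg at h
    obtain ⟨z, hz, hzlt⟩ :=
      (Metric.infDist_lt_iff ⟨0, (S k).zero_mem⟩).1 h
    rw [dist_eq_norm] at hzlt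
    have horth : (inner ℝ (g k - p k) (p k - z) : ℝ) = 0 :=
      Submodule.starProjection_inner_eq_zero (K := S k) (g k) (p k - z) (Submodule.sub_mem _ (hpmem k) hz)
    have hsq : ‖g k - z‖ ^ 2 = ‖g k - p k‖ ^ 2 + ‖p k - z‖ ^ 2 := by
      have hrw : g k - z = (g k - p k) + (p k - z) := by abel
      rw [hrw, norm_add_sq_real, horth]
      ring
    have h1 : ‖g k - p k‖ ^ 2 ≤ ‖g k - z‖ ^ 2 := by nlinarith [sq_nonneg ‖p k - z‖]
    have h2 : ‖g k - p k‖ ≤ ‖g k - z‖ :=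
      (pow_le_pow_iff_left₀ (norm_nonneg _) (norm_nonneg _) two_ne_zero).1 h1
    linarith
  -- the key inequality from the descent lemma
  have key : ∀ k, ‖p k‖ ^ 2 / (2 * L) ≤
      (f (x k) - f (x (k + 1))) +
        (f (x (k + 1)) - sInf (f '' {y | ∃ s ∈ S k, y = x k + s})) := by
    intro k
    set A : Set ℝ := f '' {y | ∃ s ∈ S k, y = x k + s} with hA
    have hbddA : BddBelow A := hbdd.mono (Set.image_subset_range _ _)
    set v : EuclideanSpace ℝ (Fin n) := (-(1 / L)) • p k with hv
    have hvmem : v ∈ S k := Submodule.smul_mem _ _ (hpmem k)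
    have hmemA : f (x k + v) ∈ A := ⟨x k + v, ⟨v, hvmem, rfl⟩, rfl⟩
    have hstep : sInf A ≤ f (x k + v) := csInf_le hbddA hmemA
    have hdesc := descent_lemma f hdiff L hlip (x k) v
    have hin : (inner ℝ (g k) v : ℝ) = -(1 / L) * ‖p k‖ ^ 2 := by
      rw [hv, real_inner_smul_right, hip k]
    have hnv : ‖v‖ ^ 2 = (1 / L) ^ 2 * ‖p k‖ ^ 2 := by
      rw [hv, norm_smul, Real.norm_eq_abs, abs_neg, abs_of_pos (by positivity : (0:ℝ) < 1 / L)]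
      ring
    have hfin : f (x k + v) ≤ f (x k) - ‖p k‖ ^ 2 / (2 * L) := by
      rw [hin, hnv] at hdesc
      have hL' : L ≠ 0 := ne_of_gt hL
      calc f (x k + v) ≤ f (x k) + -(1 / L) * ‖p k‖ ^ 2 + L / 2 * ((1 / L) ^ 2 * ‖p k‖ ^ 2) :=
            hdesc
        _ = f (x k) - ‖p k‖ ^ 2 / (2 * L) := by field_simp; ring
    linarith
  -- f (x k) converges, so consecutive differences go to 0
  obtain ⟨c, hc⟩ := hbdd
  have hanti : Antitone (fun k => f (x k)) := antitone_nat_of_succ_le hmono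
  have hbddr : BddBelow (Set.range fun k => f (x k)) := by
    refine ⟨c, ?_⟩
    rintro _ ⟨k, rfl⟩
    exact hc ⟨x k, rfl⟩
  have hconv : Tendsto (fun k => f (x k)) atTop (𝓝 (⨅ k, f (x k))) :=
    tendsto_atTop_ciInf hanti hbddr
  have hconv' : Tendsto (fun k => f (x (k + 1))) atTop (𝓝 (⨅ k, f (x k))) :=
    hconv.comp (tendsto_add_atTop_nat 1)
  have hdiffto : Tendsto (fun k => f (x k) - f (x (k + 1))) atTop (𝓝 0) := by
    simpa using hconv.sub hconv'
  -- work along the filter F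
  set F := atTop ⊓ 𝓟 K with hF
  have hRHS : Tendsto (fun k => (f (x k) - f (x (k + 1))) +
      (f (x (k + 1)) - sInf (f '' {y | ∃ s ∈ S k, y = x k + s}))) F (𝓝 0) := by
    simpa using (hdiffto.mono_left inf_le_left).add hsub
  have hp2 : Tendsto (fun k => ‖p k‖ ^ 2) F (𝓝 0) := by
    have h2L : (0:ℝ) < 2 * L := by linarith
    apply squeeze_zero (fun k => sq_nonneg _) (g := fun k => 2 * L * ((f (x k) - f (x (k + 1))) +
      (f (x (k + 1)) - sInf (f '' {y | ∃ s ∈ S k, y = x k + s}))))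
    · intro k
      have := key k
      calc ‖p k‖ ^ 2 = 2 * L * (‖p k‖ ^ 2 / (2 * L)) := by field_simp
        _ ≤ _ := by
            apply mul_le_mul_of_nonneg_left this (by linarith)
    · simpa using hRHS.const_mul (2 * L)
  have hp0 : Tendsto (fun k => ‖p k‖) F (𝓝 0) := by
    have hs : Tendsto (fun k => Real.sqrt (‖p k‖ ^ 2)) F (𝓝 (Real.sqrt 0)) :=
      (Real.continuous_sqrt.tendsto 0).comp hp2
    simpa [Real.sqrt_sq (norm_nonneg _)] using hs
  have hg0 : Tendsto (fun k => ‖g k‖) F (𝓝 0) := by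
    apply squeeze_zero (fun k => norm_nonneg _)
      (g := fun k => ‖p k‖ + Metric.infDist (g k) (S k : Set (EuclideanSpace ℝ (Fin n))))
    · intro k
      calc ‖g k‖ = ‖p k + (g k - p k)‖ := by congr 1; abel
        _ ≤ ‖p k‖ + ‖g k - p k‖ := norm_add_le _ _
        _ ≤ ‖p k‖ + Metric.infDist (g k) (S k : Set (EuclideanSpace ℝ (Fin n))) := by linarith [hpyth k]
    · simpa using hp0.add hdist
  -- F is nontrivial
  have hFne : F.NeBot := by
    have : ∃ᶠ k in atTop, k ∈ K := Nat.frequently_atTop_iff_infinite.2 hK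
    exact frequently_iff_neBot.1 this
  -- frequently small along atTop
  have hfreq : ∀ ε : ℝ, 0 < ε → ∃ᶠ k in atTop, ‖g k‖ ≤ ε := by
    intro ε hε
    have hev : ∀ᶠ k in F, ‖g k‖ ≤ ε :=
      hg0.eventually (eventually_le_nhds hε)
    exact (hev.frequently).filter_mono inf_le_left
  have hbound : IsBoundedUnder (· ≥ ·) atTop (fun k => ‖g k‖) :=
    isBoundedUnder_of ⟨0, fun k => norm_nonneg _⟩
  have hcob : IsCoboundedUnder (· ≥ ·) atTop (fun k => ‖g k‖) :=
    Filter.IsCoboundedUnder.of_frequently_le (hfreq 1 one_pos)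
  have hge : (0:ℝ) ≤ liminf (fun k => ‖g k‖) atTop :=
    le_liminf_of_le hcob (Eventually.of_forall fun k => norm_nonneg _)
  have hle : liminf (fun k => ‖g k‖) atTop ≤ 0 := by
    by_contra h
    push_neg at h
    have h2 := liminf_le_of_frequently_le (hfreq _ (half_pos h)) hbound
    linarith
  exact le_antisymm hle hge
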